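/- Let X = VΣVᵀ and Y = UΘUᵀ be eigendecompositions of positive definite matrices X and Y with orthonormal eigenvector matrices V, U and eigenvalues σ_i, θ_j. Then D_ld(X,Y) = Σ_i Σ_j (v_iᵀu_j)² (σ_i/θ_j - log(σ_i/θ_j) - 1). -/

import Mathlib

open Matrix

/-- The LogDet matrix divergence: D_ld(X,Y) = -log det(XY⁻¹) + Tr(XY⁻¹) - n. -/
noncomputable def logDetDiv {n : ℕ} (X Y : Matrix (Fin n) (Fin n) ℝ) : ℝ :=
  -Real.log ((X * Y⁻¹).det) + (X * Y⁻¹).trace - n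

theorem logDetDiv_eigendecomposition {n : ℕ}
    (V U : Matrix (Fin n) (Fin n) ℝ) (σ θ : Fin n → ℝ)
    (hV : V * Vᵀ = 1) (hU : U * Uᵀ = 1)
    (hσ : ∀ i, 0 < σ i) (hθ : ∀ j, 0 < θ j) :
    logDetDiv (V * Matrix.diagonal σ * Vᵀ) (U * Matrix.diagonal θ * Uᵀ) =
      ∑ i, ∑ j, ((Vᵀ * U) i j) ^ 2 *
        (σ i / θ j - Real.log (σ i / θ j) - 1) := by
  have hVt : Vᵀ * V = 1 := mul_eq_one_comm.mp hV
  have hUt : Uᵀ * U = 1 := mul_eq_one_comm.mp hU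
  set W : Matrix (Fin n) (Fin n) ℝ := Vᵀ * U with hW
  have hWt : Wᵀ = Uᵀ * V := by
    rw [hW, Matrix.transpose_mul, Matrix.transpose_transpose]
  have hWWt : W * Wᵀ = 1 := by
    rw [hW, hWt, Matrix.mul_assoc, ← Matrix.mul_assoc U, hU, Matrix.one_mul, hVt]
  have hWtW : Wᵀ * W = 1 := mul_eq_one_comm.mp hWWt
  have hrow : ∀ i, ∑ j, (W i j) ^ 2 = 1 := by
    intro i
    have h := congrFun (congrFun hWWt i) i
    simpa [Matrix.mul_apply, Matrix.one_apply, sq] using h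
  have hcol : ∀ j, ∑ i, (W i j) ^ 2 = 1 := by
    intro j
    have h := congrFun (congrFun hWtW j) j
    simpa [Matrix.mul_apply, Matrix.one_apply, sq] using h
  have hσ0 : ∀ i, σ i ≠ 0 := fun i => (hσ i).ne'
  have hθ0 : ∀ j, θ j ≠ 0 := fun j => (hθ j).ne'
  have hdiag : Matrix.diagonal θ * Matrix.diagonal (fun j => (θ j)⁻¹) = 1 := by
    have h : (fun j => θ j * (θ j)⁻¹) = fun _ => (1 : ℝ) :=
      funext fun j => mul_inv_cancel₀ (hθ0 j)
    rw [Matrix.diagonal_mul_diagonal, h, Matrix.diagonal_one]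
  have hYinv : (U * Matrix.diagonal θ * Uᵀ)⁻¹
      = U * Matrix.diagonal (fun j => (θ j)⁻¹) * Uᵀ := by
    apply Matrix.inv_eq_right_inv
    calc U * Matrix.diagonal θ * Uᵀ * (U * Matrix.diagonal (fun j => (θ j)⁻¹) * Uᵀ)
        = U * (Matrix.diagonal θ * ((Uᵀ * U) *
            (Matrix.diagonal (fun j => (θ j)⁻¹) * Uᵀ))) := by
          simp only [Matrix.mul_assoc]
      _ = U * ((Matrix.diagonal θ * Matrix.diagonal (fun j => (θ j)⁻¹)) * Uᵀ) := by
          rw [hUt, Matrix.one_mul, Matrix.mul_assoc]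
      _ = 1 := by rw [hdiag, Matrix.one_mul, hU]
  have hdetV : V.det * V.det = 1 := by
    have h := congrArg Matrix.det hV
    rwa [Matrix.det_mul, Matrix.det_transpose, Matrix.det_one] at h
  have hdetU : U.det * U.det = 1 := by
    have h := congrArg Matrix.det hU
    rwa [Matrix.det_mul, Matrix.det_transpose, Matrix.det_one] at h
  -- determinant of X * Y⁻¹
  have hdet : (V * Matrix.diagonal σ * Vᵀ * (U * Matrix.diagonal θ * Uᵀ)⁻¹).det
      = (∏ i, σ i) * (∏ j, (θ j)⁻¹) := by
    rw [hYinv]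
    simp only [Matrix.det_mul, Matrix.det_transpose, Matrix.det_diagonal]
    have : V.det * (∏ i, σ i) * V.det * (U.det * (∏ j, (θ j)⁻¹) * U.det)
        = (V.det * V.det) * (U.det * U.det) * ((∏ i, σ i) * (∏ j, (θ j)⁻¹)) := by
      ring
    rw [this, hdetV, hdetU, one_mul, one_mul]
  -- trace of X * Y⁻¹
  have htrace : (V * Matrix.diagonal σ * Vᵀ * (U * Matrix.diagonal θ * Uᵀ)⁻¹).trace
      = ∑ i, ∑ j, (W i j) ^ 2 * (σ i / θ j) := by
    rw [hYinv]
    have hre : V * Matrix.diagonal σ * Vᵀ * (U * Matrix.diagonal (fun j => (θ j)⁻¹) * Uᵀ)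
        = V * (Matrix.diagonal σ * Vᵀ * (U * Matrix.diagonal (fun j => (θ j)⁻¹) * Uᵀ)) := by
      simp only [Matrix.mul_assoc]
    rw [hre, Matrix.trace_mul_comm]
    have hre2 : Matrix.diagonal σ * Vᵀ * (U * Matrix.diagonal (fun j => (θ j)⁻¹) * Uᵀ) * V
        = Matrix.diagonal σ * W * Matrix.diagonal (fun j => (θ j)⁻¹) * Wᵀ := by
      rw [hW, hWt]
      simp only [Matrix.mul_assoc]
    rw [hre2]
    rw [Matrix.trace]
    congr 1
    funext i
    rw [Matrix.diag]
    rw [Matrix.mul_apply]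
    rw [Finset.sum_congr rfl (fun j _ => by
      rw [Matrix.mul_diagonal, Matrix.diagonal_mul, Matrix.transpose_apply])]
    congr 1
    funext j
    field_simp
  rw [logDetDiv, hdet, htrace]
  -- log of determinant
  have hlog : Real.log ((∏ i, σ i) * (∏ j, (θ j)⁻¹))
      = (∑ i, Real.log (σ i)) - (∑ j, Real.log (θ j)) := by
    rw [Real.log_mul (Finset.prod_ne_zero_iff.mpr fun i _ => hσ0 i)
        (Finset.prod_ne_zero_iff.mpr fun j _ => inv_ne_zero (hθ0 j)),
      Real.log_prod (fun i _ => hσ0 i),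
      Real.log_prod (fun j _ => inv_ne_zero (hθ0 j))]
    simp [Real.log_inv, sub_eq_add_neg, Finset.sum_neg_distrib]
  rw [hlog]
  -- expand the RHS
  have hterm : ∀ i j, (W i j) ^ 2 * (σ i / θ j - Real.log (σ i / θ j) - 1)
      = (W i j) ^ 2 * (σ i / θ j) - (W i j) ^ 2 * Real.log (σ i)
        + (W i j) ^ 2 * Real.log (θ j) - (W i j) ^ 2 := by
    intro i j
    rw [Real.log_div (hσ0 i) (hθ0 j)]
    ring
  have hsum : ∑ i, ∑ j, (W i j) ^ 2 * (σ i / θ j - Real.log (σ i / θ j) - 1)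
      = (∑ i, ∑ j, (W i j) ^ 2 * (σ i / θ j))
        - (∑ i, Real.log (σ i)) + (∑ j, Real.log (θ j)) - n := by
    simp only [hterm]
    rw [Finset.sum_congr rfl (fun i _ => by
      rw [Finset.sum_sub_distrib, Finset.sum_add_distrib, Finset.sum_sub_distrib,
        ← Finset.sum_mul, hrow, one_mul])]
    rw [Finset.sum_sub_distrib, Finset.sum_add_distrib, Finset.sum_sub_distrib]
    have h1 : ∑ i : Fin n, ∑ j, (W i j) ^ 2 * Real.log (θ j)
        = ∑ j, Real.log (θ j) := by
      rw [Finset.sum_comm]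
      refine Finset.sum_congr rfl fun j _ => ?_
      rw [← Finset.sum_mul, hcol, one_mul]
    rw [h1]
    simp only [Finset.sum_const, Finset.card_fin, nsmul_eq_mul, mul_one,
      div_eq_mul_inv, ← mul_assoc]
  rw [hsum]
  ring
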